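/- Let G be a finite graph and let G1, G2 be induced subgraphs of G with V(G1) ∪ V(G2) = V(G), V(G1)∖V(G2) ≠ ∅, V(G2)∖V(G1) ≠ ∅, and no edge of G joining V(G1)∖V(G2) to V(G2)∖V(G1). Suppose X = V(G1) ∩ V(G2) can be written as the union of pairwise disjoint modules X1, …, Xk of G such that for all distinct i, j every vertex of Xi is adjacent to every vertex of Xj. Then for every vertex-weight function q: V(G) → ℕ, χ_q(G) = max{χ_q(G1), χ_q(G2)} and ω_q(G) = max{ω_q(G1), ω_q(G2)}. -/

import Mathlib

open SimpleGraph

/-- `G` is `H`-free: no induced subgraph of `G` is isomorphic to `H`. -/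
def IndFree {α β : Type*} (H : SimpleGraph α) (G : SimpleGraph β) : Prop :=
  ∀ s : Set β, ¬ Nonempty (H ≃g G.induce s)

/-- The banner: a 4-cycle `0-1-2-3-0` together with a pendant vertex `4` adjacent to `0`. -/
def banner : SimpleGraph (Fin 5) :=
  SimpleGraph.fromEdgeSet {s(0,1), s(1,2), s(2,3), s(3,0), s(0,4)}

/-- The co-banner: the complement of the banner. -/
def coBanner : SimpleGraph (Fin 5) := bannerᶜ

/-- `2K₂`: the disjoint union of two edges. -/
def twoK2 : SimpleGraph (Fin 4) := SimpleGraph.fromEdgeSet {s(0,1), s(2,3)}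

/-- `3K₁`: three pairwise nonadjacent vertices. -/
def threeK1 : SimpleGraph (Fin 3) := ⊥

/-- The 5-wheel: a 5-cycle `0-1-2-3-4-0` plus a hub `5` adjacent to all cycle vertices. -/
def wheel5 : SimpleGraph (Fin 6) :=
  SimpleGraph.fromEdgeSet
    {s(0,1), s(1,2), s(2,3), s(3,4), s(4,0), s(5,0), s(5,1), s(5,2), s(5,3), s(5,4)}

/-- A nonempty set `M` is a module if every vertex outside `M` is adjacent to all
or to none of the vertices of `M`. -/
def IsModule {V : Type*} (G : SimpleGraph V) (M : Set V) : Prop :=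
  M.Nonempty ∧ ∀ v ∉ M, (∀ u ∈ M, G.Adj v u) ∨ (∀ u ∈ M, ¬ G.Adj v u)

/-- `X` is a clique-separator of modules in `G`. -/
def IsCliqueSeparatorOfModules {V : Type*} (G : SimpleGraph V) (X : Set V) : Prop :=
  (∃ (k : ℕ) (Xs : Fin k → Set V),
      (∀ i, IsModule G (Xs i)) ∧
      (∀ i j, i ≠ j → Disjoint (Xs i) (Xs j)) ∧
      (∀ i j, i ≠ j → ∀ u ∈ Xs i, ∀ v ∈ Xs j, G.Adj u v) ∧
      X = ⋃ i, Xs i) ∧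
  (∃ A B : Set V, A ∪ B = Set.univ ∧ (A \ B).Nonempty ∧ (B \ A).Nonempty ∧
      (∀ a ∈ A \ B, ∀ b ∈ B \ A, ¬ G.Adj a b) ∧ A ∩ B = X)

/-- A graph is prime if it has no homogeneous set,
i.e. no module `M` with `1 < |M| < |V(G)|`. -/
def IsPrime {V : Type*} (G : SimpleGraph V) : Prop :=
  ¬ ∃ M : Set V, IsModule G M ∧ 1 < M.ncard ∧ M.ncard < Nat.card V

/-- A nonempty graph is critical if deleting any vertex decreases the chromatic number. -/
def IsCritical {V : Type*} (G : SimpleGraph V) : Prop :=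
  Nonempty V ∧ ∀ v : V, (G.induce {u | u ≠ v}).chromaticNumber < G.chromaticNumber

/-- `G` is a `non-empty, 2K₁-free'-expansion of `G'`: the fibres of `f` partition `V(G)`
into nonempty cliques, with complete/empty bipartite connections according to `G'`. -/
def IsExpansionOf {V W : Type*} (G : SimpleGraph V) (G' : SimpleGraph W) : Prop :=
  ∃ f : V → W, Function.Surjective f ∧
    (∀ u v, u ≠ v → f u = f v → G.Adj u v) ∧
    (∀ u v, f u ≠ f v → (G.Adj u v ↔ G'.Adj (f u) (f v)))

/-- The weighted chromatic number `χ_q(G)`: the least `k` such that every vertex `v`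
can be assigned a set of `q v` colours from `{1,…,k}` with disjoint sets on adjacent
vertices. -/
noncomputable def wChromaticNumber {V : Type*} (G : SimpleGraph V) (q : V → ℕ) : ℕ :=
  sInf {k | ∃ L : V → Finset (Fin k), (∀ v, (L v).card = q v) ∧
    ∀ ⦃u v⦄, G.Adj u v → Disjoint (L u) (L v)}

/-- The weighted clique number `ω_q(G)`: the maximum total weight of a clique. -/
noncomputable def wCliqueNum {V : Type*} (G : SimpleGraph V) (q : V → ℕ) : ℕ :=
  sSup {m | ∃ s : Finset V, G.IsClique (s : Set V) ∧ m = ∑ v ∈ s, q v}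

/-- `Q(F)`: a path `u₁u₂u₃u₄` whose third vertex `u₃` has been replaced by a copy of `F`,
each of whose vertices is adjacent to both `u₂` and `u₄`. Here `inr 0 = u₁`, `inr 1 = u₂`,
`inr 2 = u₄`, and `inl w` are the vertices of the copy of `F`. -/
def QGraph {W : Type*} (F : SimpleGraph W) : SimpleGraph (W ⊕ Fin 3) :=
  SimpleGraph.fromRel (fun a b =>
    (∃ w w', a = Sum.inl w ∧ b = Sum.inl w' ∧ F.Adj w w') ∨
    (a = Sum.inr 0 ∧ b = Sum.inr 1) ∨
    (∃ w, a = Sum.inl w ∧ (b = Sum.inr 1 ∨ b = Sum.inr 2)))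

/-- The join of two graphs: all edges of both graphs plus all edges in between. -/
def joinGraph {α β : Type*} (G₁ : SimpleGraph α) (G₂ : SimpleGraph β) :
    SimpleGraph (α ⊕ β) :=
  SimpleGraph.fromRel (fun a b =>
    (∃ u v, a = Sum.inl u ∧ b = Sum.inl v ∧ G₁.Adj u v) ∨
    (∃ u v, a = Sum.inr u ∧ b = Sum.inr v ∧ G₂.Adj u v) ∨
    (∃ u v, a = Sum.inl u ∧ b = Sum.inr v))

/-- `H` has a spanning complete bipartite subgraph. -/
def HasSpanningCompleteBipartite {α : Type*} (H : SimpleGraph α) : Prop :=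
  ∃ A B : Set α, A.Nonempty ∧ B.Nonempty ∧ Disjoint A B ∧ A ∪ B = Set.univ ∧
    ∀ a ∈ A, ∀ b ∈ B, H.Adj a b

/-- `G'` is a `q`-expansion of `G`: each vertex `u` of `G` is replaced by a clique on
`q u` vertices, joined completely or not at all according to adjacency in `G`. -/
def IsWeightedExpansion {V' V : Type*} (G' : SimpleGraph V') (G : SimpleGraph V)
    (q : V → ℕ) : Prop :=
  ∃ f : V' → V,
    (∀ v : V, Nat.card (f ⁻¹' {v}) = q v) ∧
    (∀ a b : V', a ≠ b → f a = f b → G'.Adj a b) ∧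
    (∀ a b : V', f a ≠ f b → (G'.Adj a b ↔ G.Adj (f a) (f b)))

/-- `q` is `⊲`-minimal: no weight function pointwise at most `q` with strictly smaller
total weight has the same weighted chromatic number. -/
def IsTriMinimal {V : Type*} [Fintype V] (G : SimpleGraph V) (q : V → ℕ) : Prop :=
  ¬ ∃ q' : V → ℕ, (∀ v, q' v ≤ q v) ∧ (∑ v, q' v) < (∑ v, q v) ∧
      wChromaticNumber G q' = wChromaticNumber G q

section AuxLemmas

def IsProperW {V : Type*} (G : SimpleGraph V) (q : V → ℕ) (K : ℕ)
    (L : V → Finset (Fin K)) : Prop :=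
  (∀ v, (L v).card = q v) ∧ ∀ ⦃u v⦄, G.Adj u v → Disjoint (L u) (L v)

lemma aux_exists_colouring {V : Type*} [Finite V] (G : SimpleGraph V) (q : V → ℕ) :
    ∃ K : ℕ, ∃ L : V → Finset (Fin K), IsProperW G q K L := by
  have : Fintype V := Fintype.ofFinite V
  classical
  refine ⟨∑ v, q v, ?_⟩
  have hcard : Fintype.card ((v : V) × Fin (q v)) = ∑ v, q v := by
    simp [Fintype.card_sigma]
  let e : ((v : V) × Fin (q v)) ≃ Fin (∑ v, q v) := Fintype.equivFinOfCardEq hcard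
  refine ⟨fun v => Finset.univ.image (fun j : Fin (q v) => e ⟨v, j⟩), fun v => ?_, ?_⟩
  · rw [Finset.card_image_of_injective _ (fun a b hab => ?_), Finset.card_univ,
      Fintype.card_fin]
    have := e.injective hab
    exact eq_of_heq (Sigma.ext_iff.1 this).2
  · intro u v huv
    rw [Finset.disjoint_left]
    rintro x hx hy
    simp only [Finset.mem_image, Finset.mem_univ, true_and] at hx hy
    obtain ⟨a, ha⟩ := hx
    obtain ⟨b, hb⟩ := hy
    have := e.injective (ha.trans hb.symm)
    exact huv.ne (congrArg Sigma.fst this)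

lemma aux_mono {V : Type*} (G : SimpleGraph V) (q : V → ℕ) {K K' : ℕ} (h : K ≤ K')
    {L : V → Finset (Fin K)} (hL : IsProperW G q K L) :
    ∃ L' : V → Finset (Fin K'), IsProperW G q K' L' := by
  refine ⟨fun v => (L v).map (Fin.castLEEmb h), fun v => ?_, fun u v huv => ?_⟩
  · rw [Finset.card_map]; exact hL.1 v
  · rw [Finset.disjoint_map]; exact hL.2 huv

lemma aux_chrom_le {V : Type*} (G : SimpleGraph V) (q : V → ℕ) {K : ℕ}
    {L : V → Finset (Fin K)} (hL : IsProperW G q K L) :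
    wChromaticNumber G q ≤ K :=
  Nat.sInf_le ⟨L, hL⟩

lemma aux_chrom_mem {V : Type*} [Finite V] (G : SimpleGraph V) (q : V → ℕ) :
    ∃ L : V → Finset (Fin (wChromaticNumber G q)), IsProperW G q _ L := by
  obtain ⟨K, L, hL⟩ := aux_exists_colouring G q
  exact Nat.sInf_mem (s := {k | ∃ L : V → Finset (Fin k), (∀ v, (L v).card = q v) ∧
    ∀ ⦃u v⦄, G.Adj u v → Disjoint (L u) (L v)}) ⟨K, L, hL⟩

lemma exists_perm_of_injOn {α : Type*} [Fintype α] [DecidableEq α] (s : Finset α)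
    (f : α → α) (hinj : Set.InjOn f ↑s) :
    ∃ σ : Equiv.Perm α, ∀ x ∈ s, σ x = f x := by
  classical
  set t : Finset α := s.image f with ht
  have hcard : t.card = s.card := Finset.card_image_of_injOn hinj
  obtain ⟨e, he⟩ : ∃ e : (↑s : Set α) ≃ (↑t : Set α), ∀ x, (e x : α) = f x := by
    refine ⟨Equiv.ofBijective (fun x => ⟨f x.1, ?_⟩) ⟨fun a b hab => ?_, fun y => ?_⟩,
      fun x => rfl⟩
    · exact Finset.mem_coe.2 (Finset.mem_image_of_mem f (Finset.mem_coe.1 x.2))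
    · exact Subtype.ext (hinj a.2 b.2 (congrArg Subtype.val hab))
    · obtain ⟨x, hx, hxy⟩ := Finset.mem_image.1 (Finset.mem_coe.1 y.2)
      exact ⟨⟨x, hx⟩, Subtype.ext hxy⟩
  have hc : Fintype.card (↑(↑s : Set α)ᶜ : Set α) = Fintype.card (↑(↑t : Set α)ᶜ : Set α) := by
    rw [Fintype.card_compl_set, Fintype.card_compl_set]
    congr 1
    simp [hcard]
  have ec : (↑(↑s : Set α)ᶜ : Set α) ≃ (↑(↑t : Set α)ᶜ : Set α) := Fintype.equivOfCardEq hc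
  refine ⟨((Equiv.Set.sumCompl (↑s : Set α)).symm.trans ((e.sumCongr ec).trans
      (Equiv.Set.sumCompl (↑t : Set α)))), fun x hx => ?_⟩
  have h1 : (Equiv.Set.sumCompl (↑s : Set α)).symm x
      = Sum.inl (⟨x, Finset.mem_coe.2 hx⟩ : (↑s : Set α)) :=
    Equiv.Set.sumCompl_symm_apply_of_mem (Finset.mem_coe.2 hx)
  rw [Equiv.trans_apply, Equiv.trans_apply, h1, Equiv.sumCongr_apply, Sum.map_inl,
    Equiv.Set.sumCompl_apply_inl]
  exact he _

lemma aux_clique_bdd {V : Type*} [Finite V] (G : SimpleGraph V) (q : V → ℕ) :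
    BddAbove {m | ∃ s : Finset V, G.IsClique (s : Set V) ∧ m = ∑ v ∈ s, q v} := by
  have : Fintype V := Fintype.ofFinite V
  classical
  refine ⟨∑ v, q v, fun m hm => ?_⟩
  obtain ⟨s, _, rfl⟩ := hm
  exact Finset.sum_le_sum_of_subset (Finset.subset_univ s)

lemma aux_clique_nonempty {V : Type*} (G : SimpleGraph V) (q : V → ℕ) :
    {m | ∃ s : Finset V, G.IsClique (s : Set V) ∧ m = ∑ v ∈ s, q v}.Nonempty :=
  ⟨0, ∅, by simp⟩

end AuxLemmas

/-- If `G = G₁ ∪ G₂` where `V(G₁) ∩ V(G₂)` is a clique-separator of modules, then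
`χ_q(G) = max {χ_q(G₁), χ_q(G₂)}` and `ω_q(G) = max {ω_q(G₁), ω_q(G₂)}` for every
vertex-weight function `q`. -/
theorem stmt11 {V : Type} [Fintype V] (G : SimpleGraph V) (A B : Set V)
    (hUnion : A ∪ B = Set.univ)
    (hA : (A \ B).Nonempty) (hB : (B \ A).Nonempty)
    (hNoEdge : ∀ a ∈ A \ B, ∀ b ∈ B \ A, ¬ G.Adj a b)
    (k : ℕ) (X : Fin k → Set V)
    (hmod : ∀ i, IsModule G (X i))
    (hdisj : ∀ i j, i ≠ j → Disjoint (X i) (X j))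
    (hcomp : ∀ i j, i ≠ j → ∀ u ∈ X i, ∀ v ∈ X j, G.Adj u v)
    (hX : A ∩ B = ⋃ i, X i)
    (q : V → ℕ) :
    wChromaticNumber G q =
      max (wChromaticNumber (G.induce A) (fun v => q v.1))
          (wChromaticNumber (G.induce B) (fun v => q v.1)) ∧
    wCliqueNum G q =
      max (wCliqueNum (G.induce A) (fun v => q v.1))
          (wCliqueNum (G.induce B) (fun v => q v.1)) := by
  classical
  -- basic memberships
  have hmemB : ∀ v : V, v ∉ A → v ∈ B := by
    intro v hv
    have : v ∈ A ∪ B := hUnion ▸ Set.mem_univ v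
    exact this.resolve_left hv
  have hXsub : ∀ i, X i ⊆ A ∩ B := fun i => hX ▸ Set.subset_iUnion X i
  have hXuniq : ∀ {i j : Fin k} {v : V}, v ∈ X i → v ∈ X j → i = j := by
    intro i j v hi hj
    by_contra hij
    exact (hdisj i j hij).le_bot ⟨hi, hj⟩ 
  constructor
  · -- chromatic number part
    apply le_antisymm
    · -- χ G ≤ max
      obtain ⟨L1₀, hL1₀⟩ := aux_chrom_mem (G.induce A) (fun v => q v.1)
      obtain ⟨L2₀, hL2₀⟩ := aux_chrom_mem (G.induce B) (fun v => q v.1)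
      set K := max (wChromaticNumber (G.induce A) (fun v => q v.1))
        (wChromaticNumber (G.induce B) (fun v => q v.1)) with hK
      obtain ⟨L1, hL1⟩ := aux_mono _ _ (le_max_left _ _) hL1₀
      obtain ⟨L2, hL2⟩ := aux_mono _ _ (le_max_right _ _) hL2₀
      set L1' : V → Finset (Fin K) := fun v => if h : v ∈ A then L1 ⟨v, h⟩ else ∅
        with hL1'def
      set L2' : V → Finset (Fin K) := fun v => if h : v ∈ B then L2 ⟨v, h⟩ else ∅
        with hL2'def
      have hL1'A : ∀ v (h : v ∈ A), L1' v = L1 ⟨v, h⟩ := by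
        intro v h
        simp only [hL1'def]
        rw [dif_pos h]
      have hL2'B : ∀ v (h : v ∈ B), L2' v = L2 ⟨v, h⟩ := by
        intro v h
        simp only [hL2'def]
        rw [dif_pos h]
      have hL1'card : ∀ v, v ∈ A → (L1' v).card = q v := by
        intro v h
        rw [hL1'A v h]
        exact hL1.1 ⟨v, h⟩
      have hL2'card : ∀ v, v ∈ B → (L2' v).card = q v := by
        intro v h
        rw [hL2'B v h]
        exact hL2.1 ⟨v, h⟩
      have hL1'disj : ∀ {u v}, u ∈ A → v ∈ A → G.Adj u v → Disjoint (L1' u) (L1' v) := by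
        intro u v hu hv huv
        rw [hL1'A u hu, hL1'A v hv]
        exact hL1.2 (by simpa using huv : (G.induce A).Adj ⟨u, hu⟩ ⟨v, hv⟩)
      have hL2'disj : ∀ {u v}, u ∈ B → v ∈ B → G.Adj u v → Disjoint (L2' u) (L2' v) := by
        intro u v hu hv huv
        rw [hL2'B u hu, hL2'B v hv]
        exact hL2.2 (by simpa using huv : (G.induce B).Adj ⟨u, hu⟩ ⟨v, hv⟩)
      set C1 : Fin k → Finset (Fin K) := fun i => (X i).toFinset.biUnion L1' with hC1def
      set C2 : Fin k → Finset (Fin K) := fun i => (X i).toFinset.biUnion L2' with hC2def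
      have hC1mem : ∀ i v, v ∈ X i → ∀ x ∈ L1' v, x ∈ C1 i := by
        intro i v hv x hx
        exact Finset.mem_biUnion.2 ⟨v, Set.mem_toFinset.2 hv, hx⟩
      have hC2mem : ∀ i v, v ∈ X i → ∀ x ∈ L2' v, x ∈ C2 i := by
        intro i v hv x hx
        exact Finset.mem_biUnion.2 ⟨v, Set.mem_toFinset.2 hv, hx⟩
      have hC1elim : ∀ i x, x ∈ C1 i → ∃ v ∈ X i, x ∈ L1' v := by
        intro i x hx
        obtain ⟨v, hv, hxv⟩ := Finset.mem_biUnion.1 hx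
        exact ⟨v, Set.mem_toFinset.1 hv, hxv⟩
      have hC2elim : ∀ i x, x ∈ C2 i → ∃ v ∈ X i, x ∈ L2' v := by
        intro i x hx
        obtain ⟨v, hv, hxv⟩ := Finset.mem_biUnion.1 hx
        exact ⟨v, Set.mem_toFinset.1 hv, hxv⟩
      have hC1disj : ∀ i j, i ≠ j → Disjoint (C1 i) (C1 j) := by
        intro i j hij
        rw [Finset.disjoint_left]
        intro x hxi hxj
        obtain ⟨u, hu, hxu⟩ := hC1elim i x hxi
        obtain ⟨v, hv, hxv⟩ := hC1elim j x hxj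
        exact Finset.disjoint_left.1
          (hL1'disj (hXsub i hu).1 (hXsub j hv).1 (hcomp i j hij u hu v hv)) hxu hxv
      have hC2disj : ∀ i j, i ≠ j → Disjoint (C2 i) (C2 j) := by
        intro i j hij
        rw [Finset.disjoint_left]
        intro x hxi hxj
        obtain ⟨u, hu, hxu⟩ := hC2elim i x hxi
        obtain ⟨v, hv, hxv⟩ := hC2elim j x hxj
        exact Finset.disjoint_left.1
          (hL2'disj (hXsub i hu).2 (hXsub j hv).2 (hcomp i j hij u hu v hv)) hxu hxv
      set c : Fin k → ℕ := fun i => wChromaticNumber (G.induce (X i)) (fun v => q v.1)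
        with hcdef
      have hc1 : ∀ i, c i ≤ (C1 i).card := by
        intro i
        refine aux_chrom_le _ _ (K := (C1 i).card)
          (L := fun v : ↥(X i) => (L1' ↑v).attach.image
            (fun x => (C1 i).equivFin ⟨x.1, hC1mem i ↑v v.2 x.1 x.2⟩)) ⟨?_, ?_⟩
        · intro v
          have hinj : Function.Injective (fun x : {a // a ∈ L1' ↑v} =>
              (C1 i).equivFin ⟨x.1, hC1mem i ↑v v.2 x.1 x.2⟩) := by
            intro a b hab
            have h' := (C1 i).equivFin.injective hab
            have h'' := Subtype.ext_iff.1 h'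
            exact Subtype.ext h''
          beta_reduce
          rw [Finset.card_image_of_injective _ hinj, Finset.card_attach]
          exact hL1'card ↑v (hXsub i v.2).1
        · intro u v huv
          rw [Finset.disjoint_left]
          rintro x hx hy
          obtain ⟨a, ha, rfl⟩ := Finset.mem_image.1 hx
          obtain ⟨b, hb, hba⟩ := Finset.mem_image.1 hy
          have hadj : G.Adj ↑u ↑v := by simpa using huv
          have hd := hL1'disj (hXsub i u.2).1 (hXsub i v.2).1 hadj
          have hab : (b : Fin K) = (a : Fin K) :=
            congrArg Subtype.val ((C1 i).equivFin.injective hba)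
          exact Finset.disjoint_left.1 hd (hab ▸ a.2) b.2
      have hc2 : ∀ i, c i ≤ (C2 i).card := by
        intro i
        refine aux_chrom_le _ _ (K := (C2 i).card)
          (L := fun v : ↥(X i) => (L2' ↑v).attach.image
            (fun x => (C2 i).equivFin ⟨x.1, hC2mem i ↑v v.2 x.1 x.2⟩)) ⟨?_, ?_⟩
        · intro v
          have hinj : Function.Injective (fun x : {a // a ∈ L2' ↑v} =>
              (C2 i).equivFin ⟨x.1, hC2mem i ↑v v.2 x.1 x.2⟩) := by
            intro a b hab
            have h' := (C2 i).equivFin.injective hab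
            have h'' := Subtype.ext_iff.1 h'
            exact Subtype.ext h''
          beta_reduce
          rw [Finset.card_image_of_injective _ hinj, Finset.card_attach]
          exact hL2'card ↑v (hXsub i v.2).2
        · intro u v huv
          rw [Finset.disjoint_left]
          rintro x hx hy
          obtain ⟨a, ha, rfl⟩ := Finset.mem_image.1 hx
          obtain ⟨b, hb, hba⟩ := Finset.mem_image.1 hy
          have hadj : G.Adj ↑u ↑v := by simpa using huv
          have hd := hL2'disj (hXsub i u.2).2 (hXsub i v.2).2 hadj
          have hab : (b : Fin K) = (a : Fin K) :=
            congrArg Subtype.val ((C2 i).equivFin.injective hba)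
          exact Finset.disjoint_left.1 hd (hab ▸ a.2) b.2
      have hMex : ∀ i, ∃ Mi : ↥(X i) → Finset (Fin (c i)),
          IsProperW (G.induce (X i)) (fun v => q v.1) (c i) Mi :=
        fun i => aux_chrom_mem _ _
      choose M hM using hMex
      set φ1 : ∀ i : Fin k, Fin (c i) → Fin K :=
        fun i j => ((C1 i).equivFin.symm (Fin.castLE (hc1 i) j)).1 with hφ1def
      set φ2 : ∀ i : Fin k, Fin (c i) → Fin K :=
        fun i j => ((C2 i).equivFin.symm (Fin.castLE (hc2 i) j)).1 with hφ2def
      have hφ1inj : ∀ i, Function.Injective (φ1 i) := by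
        intro i a b hab
        exact Fin.castLE_injective _ ((C1 i).equivFin.symm.injective (Subtype.ext hab))
      have hφ2inj : ∀ i, Function.Injective (φ2 i) := by
        intro i a b hab
        exact Fin.castLE_injective _ ((C2 i).equivFin.symm.injective (Subtype.ext hab))
      have hφ1mem : ∀ i j, φ1 i j ∈ C1 i := fun i j => ((C1 i).equivFin.symm _).2
      have hφ2mem : ∀ i j, φ2 i j ∈ C2 i := fun i j => ((C2 i).equivFin.symm _).2
      have hφ1uniq : ∀ {i i' : Fin k} {j : Fin (c i)} {j' : Fin (c i')},
          φ1 i j = φ1 i' j' → i = i' := by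
        intro i i' j j' h
        by_contra hii
        exact Finset.disjoint_left.1 (hC1disj i i' hii) (hφ1mem i j) (h ▸ hφ1mem i' j')
      have hφ2uniq : ∀ {i i' : Fin k} {j : Fin (c i)} {j' : Fin (c i')},
          φ2 i j = φ2 i' j' → i = i' := by
        intro i i' j j' h
        by_contra hii
        exact Finset.disjoint_left.1 (hC2disj i i' hii) (hφ2mem i j) (h ▸ hφ2mem i' j')
      have hkey : ∀ (i i' : Fin k) (j : Fin (c i)) (j' : Fin (c i')),
          φ2 i j = φ2 i' j' → φ1 i j = φ1 i' j' := by
        intro i i' j j' hphi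
        obtain rfl : i = i' := hφ2uniq hphi
        rw [hφ2inj i hphi]
      set f : Fin K → Fin K := fun x =>
        if h : ∃ i, ∃ j : Fin (c i), φ2 i j = x then φ1 h.choose h.choose_spec.choose
        else x with hfdef
      have hf : ∀ i (j : Fin (c i)), f (φ2 i j) = φ1 i j := by
        intro i j
        have h : ∃ i', ∃ j' : Fin (c i'), φ2 i' j' = φ2 i j := ⟨i, j, rfl⟩
        simp only [hfdef]
        rw [dif_pos h]
        exact hkey _ _ _ _ h.choose_spec.choose_spec
      set S2 : Finset (Fin K) := Finset.univ.biUnion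
        (fun i => Finset.univ.image (φ2 i)) with hS2def
      have hS2mem : ∀ i (j : Fin (c i)), φ2 i j ∈ S2 := by
        intro i j
        exact Finset.mem_biUnion.2 ⟨i, Finset.mem_univ i,
          Finset.mem_image_of_mem _ (Finset.mem_univ j)⟩
      have hS2elim : ∀ x ∈ S2, ∃ i, ∃ j : Fin (c i), φ2 i j = x := by
        intro x hx
        obtain ⟨i, _, hx⟩ := Finset.mem_biUnion.1 hx
        obtain ⟨j, _, hj⟩ := Finset.mem_image.1 hx
        exact ⟨i, j, hj⟩
      have hinjOn : Set.InjOn f ↑S2 := by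
        intro x hx y hy hxy
        obtain ⟨i, j, rfl⟩ := hS2elim x (Finset.mem_coe.1 hx)
        obtain ⟨i', j', rfl⟩ := hS2elim y (Finset.mem_coe.1 hy)
        rw [hf, hf] at hxy
        obtain rfl : i = i' := hφ1uniq hxy
        rw [hφ1inj i hxy]
      obtain ⟨σ, hσ⟩ := exists_perm_of_injOn S2 f hinjOn
      have hσ2 : ∀ i (j : Fin (c i)), σ (φ2 i j) = φ1 i j := by
        intro i j
        rw [hσ _ (hS2mem i j), hf]
      set M' : ∀ i : Fin k, V → Finset (Fin (c i)) :=
        fun i v => if h : v ∈ X i then M i ⟨v, h⟩ else ∅ with hM'def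
      set idx : (v : V) → v ∈ A ∩ B → Fin k :=
        fun v h => (Set.mem_iUnion.1 (hX ▸ h)).choose with hidxdef
      have hidx : ∀ v (h : v ∈ A ∩ B), v ∈ X (idx v h) :=
        fun v h => (Set.mem_iUnion.1 (hX ▸ h)).choose_spec
      set L : V → Finset (Fin K) := fun v =>
        if h : v ∈ A ∩ B then (M' (idx v h) v).image (φ1 (idx v h))
        else if v ∈ A then L1' v else (L2' v).image σ with hLdef
      have hLX : ∀ v (h : v ∈ A ∩ B),
          L v = (M (idx v h) ⟨v, hidx v h⟩).image (φ1 (idx v h)) := by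
        intro v h
        simp only [hLdef]
        rw [dif_pos h]
        simp only [hM'def]
        rw [dif_pos (hidx v h)]
      have hLA : ∀ v, v ∈ A → v ∉ B → L v = L1' v := by
        intro v hvA hvB
        simp only [hLdef]
        rw [dif_neg (fun hc : v ∈ A ∩ B => hvB hc.2), if_pos hvA]
      have hLB : ∀ v, v ∉ A → L v = (L2' v).image σ := by
        intro v hvA
        simp only [hLdef]
        rw [dif_neg (fun hc : v ∈ A ∩ B => hvA hc.1), if_neg hvA]
      have himg1 : ∀ (i : Fin k) (t : Finset (Fin (c i))), t.image (φ1 i) ⊆ C1 i :=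
        fun i t => Finset.image_subset_iff.2 (fun x _ => hφ1mem i x)
      have hallAdj : ∀ (i : Fin k) (u v : V), u ∈ X i → v ∉ X i → G.Adj u v →
          ∀ w ∈ X i, G.Adj v w := by
        intro i u v hu hv huv
        rcases (hmod i).2 v hv with hall | hnone
        · exact hall
        · exact absurd huv.symm (hnone u hu)
      have hLcard : ∀ v, (L v).card = q v := by
        intro v
        by_cases h : v ∈ A ∩ B
        · rw [hLX v h, Finset.card_image_of_injective _ (hφ1inj _)]
          exact (hM (idx v h)).1 ⟨v, hidx v h⟩
        · by_cases hvA : v ∈ A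
          · rw [hLA v hvA (fun hb => h ⟨hvA, hb⟩)]
            exact hL1'card v hvA
          · rw [hLB v hvA, Finset.card_image_of_injective _ σ.injective]
            exact hL2'card v (hmemB v hvA)
      have key11' : ∀ (i j : Fin k), i = j → ∀ u v (hu : u ∈ X i) (hv : v ∈ X j),
          G.Adj u v → Disjoint ((M i ⟨u, hu⟩).image (φ1 i)) ((M j ⟨v, hv⟩).image (φ1 j)) := by
        rintro i j rfl u v hu hv huv
        have hadj : (G.induce (X i)).Adj ⟨u, hu⟩ ⟨v, hv⟩ := by simpa using huv
        exact (Finset.disjoint_image (hφ1inj i)).2 ((hM i).2 hadj)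
      have key11 : ∀ u v (hu : u ∈ A ∩ B) (hv : v ∈ A ∩ B), G.Adj u v →
          Disjoint (L u) (L v) := by
        intro u v hu hv huv
        rw [hLX u hu, hLX v hv]
        rcases eq_or_ne (idx u hu) (idx v hv) with hij | hij
        · exact key11' _ _ hij u v (hidx u hu) (hidx v hv) huv
        · exact Finset.disjoint_of_subset_left (himg1 _ _)
            (Finset.disjoint_of_subset_right (himg1 _ _) (hC1disj _ _ hij))
      have key12 : ∀ u v (hu : u ∈ A ∩ B), v ∈ A → v ∉ B → G.Adj u v →
          Disjoint (L u) (L v) := by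
        intro u v hu hvA hvB huv
        rw [hLX u hu, hLA v hvA hvB]
        have hvX : v ∉ X (idx u hu) := fun hvx => hvB (hXsub _ hvx).2
        have hall := hallAdj _ u v (hidx u hu) hvX huv
        refine Finset.disjoint_of_subset_left (himg1 _ _) ?_
        rw [Finset.disjoint_left]
        intro x hxC hxv
        obtain ⟨w, hw, hxw⟩ := hC1elim _ x hxC
        exact Finset.disjoint_left.1
          (hL1'disj (hXsub _ hw).1 hvA (hall w hw).symm) hxw hxv
      have key13 : ∀ u v (hu : u ∈ A ∩ B), v ∉ A → G.Adj u v →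
          Disjoint (L u) (L v) := by
        intro u v hu hvA huv
        rw [hLX u hu, hLB v hvA]
        have hvB := hmemB v hvA
        have hvX : v ∉ X (idx u hu) := fun hvx => hvA (hXsub _ hvx).1
        have hall := hallAdj _ u v (hidx u hu) hvX huv
        rw [Finset.disjoint_left]
        intro x hx hy
        obtain ⟨a, ha, rfl⟩ := Finset.mem_image.1 hx
        obtain ⟨b, hb, hba⟩ := Finset.mem_image.1 hy
        have hbeq : b = φ2 (idx u hu) a := σ.injective (by rw [hba, hσ2])
        subst hbeq
        obtain ⟨w, hw, hxw⟩ := hC2elim _ _ (hφ2mem (idx u hu) a)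
        exact Finset.disjoint_left.1
          (hL2'disj hvB (hXsub _ hw).2 (hall w hw)) hb hxw
      have key23 : ∀ u v, u ∈ A → u ∉ B → v ∉ A → G.Adj u v →
          Disjoint (L u) (L v) :=
        fun u v huA huB hvA huv =>
          absurd huv (hNoEdge u ⟨huA, huB⟩ v ⟨hmemB v hvA, hvA⟩)
      have hproper : IsProperW G q K L := by
        refine ⟨hLcard, ?_⟩
        intro u v huv
        by_cases hu : u ∈ A ∩ B
        · by_cases hv : v ∈ A ∩ B
          · exact key11 u v hu hv huv
          · by_cases hvA : v ∈ A
            · exact key12 u v hu hvA (fun hb => hv ⟨hvA, hb⟩) huv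
            · exact key13 u v hu hvA huv
        · by_cases huA : u ∈ A
          · have huB : u ∉ B := fun hb => hu ⟨huA, hb⟩
            by_cases hv : v ∈ A ∩ B
            · exact (key12 v u hv huA huB huv.symm).symm
            · by_cases hvA : v ∈ A
              · rw [hLA u huA huB, hLA v hvA (fun hb => hv ⟨hvA, hb⟩)]
                exact hL1'disj huA hvA huv
              · exact key23 u v huA huB hvA huv
          · by_cases hv : v ∈ A ∩ B
            · exact (key13 v u hv huA huv.symm).symm
            · by_cases hvA : v ∈ A
              · exact (key23 v u hvA (fun hb => hv ⟨hvA, hb⟩) huA huv.symm).symm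
              · rw [hLB u huA, hLB v hvA]
                exact (Finset.disjoint_image σ.injective).2
                  (hL2'disj (hmemB u huA) (hmemB v hvA) huv)
      exact aux_chrom_le G q hproper
    · -- max ≤ χ G
      obtain ⟨LG, hLG⟩ := aux_chrom_mem G q
      refine max_le ?_ ?_
      · refine aux_chrom_le _ _ (L := fun v : ↥A => LG ↑v) ⟨fun v => hLG.1 ↑v, ?_⟩
        intro u v huv
        exact hLG.2 (by simpa using huv : G.Adj ↑u ↑v)
      · refine aux_chrom_le _ _ (L := fun v : ↥B => LG ↑v) ⟨fun v => hLG.1 ↑v, ?_⟩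
        intro u v huv
        exact hLG.2 (by simpa using huv : G.Adj ↑u ↑v)
  · -- clique number part
    have liftA : ∀ m ∈ {m | ∃ s : Finset ↥A, (G.induce A).IsClique (s : Set ↥A) ∧
        m = ∑ v ∈ s, q v.1},
        m ∈ {m | ∃ s : Finset V, G.IsClique (s : Set V) ∧ m = ∑ v ∈ s, q v} := by
      rintro m ⟨s, hs, rfl⟩
      refine ⟨s.map (Function.Embedding.subtype _), ?_, ?_⟩
      · rintro a ha b hb hab
        simp only [Finset.coe_map, Set.mem_image, Finset.mem_coe,
          Function.Embedding.coe_subtype] at ha hb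
        obtain ⟨x, hx, rfl⟩ := ha
        obtain ⟨y, hy, rfl⟩ := hb
        exact hs hx hy (fun hxy => hab (congrArg _ hxy))
      · rw [Finset.sum_map]
        rfl
    have liftB : ∀ m ∈ {m | ∃ s : Finset ↥B, (G.induce B).IsClique (s : Set ↥B) ∧
        m = ∑ v ∈ s, q v.1},
        m ∈ {m | ∃ s : Finset V, G.IsClique (s : Set V) ∧ m = ∑ v ∈ s, q v} := by
      rintro m ⟨s, hs, rfl⟩
      refine ⟨s.map (Function.Embedding.subtype _), ?_, ?_⟩
      · rintro a ha b hb hab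
        simp only [Finset.coe_map, Set.mem_image, Finset.mem_coe,
          Function.Embedding.coe_subtype] at ha hb
        obtain ⟨x, hx, rfl⟩ := ha
        obtain ⟨y, hy, rfl⟩ := hb
        exact hs hx hy (fun hxy => hab (congrArg _ hxy))
      · rw [Finset.sum_map]
        rfl
    apply le_antisymm
    · -- ω G ≤ max
      obtain ⟨s, hs, hsum⟩ := Nat.sSup_mem (aux_clique_nonempty G q) (aux_clique_bdd G q)
      have hgoal : wCliqueNum G q = ∑ v ∈ s, q v := hsum
      rw [hgoal]
      -- s ⊆ A or s ⊆ B
      have hcases : (↑s : Set V) ⊆ A ∨ (↑s : Set V) ⊆ B := by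
        by_cases hsA : (↑s : Set V) ⊆ A
        · exact Or.inl hsA
        by_cases hsB : (↑s : Set V) ⊆ B
        · exact Or.inr hsB
        exfalso
        obtain ⟨a, ha, haA⟩ := Set.not_subset.1 hsA
        obtain ⟨b, hb, hbB⟩ := Set.not_subset.1 hsB
        have haB : a ∈ B := hmemB a haA
        have hbA : b ∈ A := by
          by_contra hbA'
          exact hbB (hmemB b hbA')
        have hab : a ≠ b := fun h => haA (h ▸ hbA)
        exact hNoEdge b ⟨hbA, hbB⟩ a ⟨haB, haA⟩ (hs hb ha hab.symm)
      rcases hcases with hsub | hsub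
      · refine le_max_iff.2 (Or.inl (le_csSup (aux_clique_bdd (G.induce A) _) ?_))
        refine ⟨s.attach.map ⟨fun x => (⟨x.1, hsub x.2⟩ : ↥A),
          fun a b h => Subtype.ext (by have h' := congrArg Subtype.val h; exact h')⟩, ?_, ?_⟩
        · rintro ⟨a, haA⟩ ha ⟨b, hbA⟩ hb hab
          simp only [Finset.coe_map, Set.mem_image, Finset.mem_coe,
            Function.Embedding.coeFn_mk, Finset.mem_attach, true_and, Subtype.exists,
            Subtype.mk.injEq] at ha hb
          obtain ⟨ha', hha, ⟨⟩⟩ := ha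
          obtain ⟨hb', hhb, ⟨⟩⟩ := hb
          exact hs hha hhb (fun h => hab (Subtype.ext h))
        · rw [Finset.sum_map]
          exact (Finset.sum_attach s (fun v => q v)).symm
      · refine le_max_iff.2 (Or.inr (le_csSup (aux_clique_bdd (G.induce B) _) ?_))
        refine ⟨s.attach.map ⟨fun x => (⟨x.1, hsub x.2⟩ : ↥B),
          fun a b h => Subtype.ext (by have h' := congrArg Subtype.val h; exact h')⟩, ?_, ?_⟩
        · rintro ⟨a, haA⟩ ha ⟨b, hbA⟩ hb hab
          simp only [Finset.coe_map, Set.mem_image, Finset.mem_coe,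
            Function.Embedding.coeFn_mk, Finset.mem_attach, true_and, Subtype.exists,
            Subtype.mk.injEq] at ha hb
          obtain ⟨ha', hha, ⟨⟩⟩ := ha
          obtain ⟨hb', hhb, ⟨⟩⟩ := hb
          exact hs hha hhb (fun h => hab (Subtype.ext h))
        · rw [Finset.sum_map]
          exact (Finset.sum_attach s (fun v => q v)).symm
    · -- max ≤ ω G
      refine max_le ?_ ?_
      · exact csSup_le (aux_clique_nonempty _ _)
          (fun m hm => le_csSup (aux_clique_bdd G q) (liftA m hm))
      · exact csSup_le (aux_clique_nonempty _ _)
          (fun m hm => le_csSup (aux_clique_bdd G q) (liftB m hm))
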